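/- Let X ∈ ℝ^{n×K} have full column rank, D = diag(d) with d a stationary distribution of row-stochastic P and d > 0 entrywise, γ ∈ [0,1), and let w* satisfy X^T D(γP - I)Xw* + X^T D r = 0. Define g(w) = X^T D(γP - I)Xw + X^T D r. Then for all w, (w - w*)^T g(w) ≤ -(1-γ)·λ_min(X^T D X)·‖w - w*‖², where λ_min denotes the smallest eigenvalue of the symmetric positive definite matrix X^T D X. -/

import Mathlib

open Matrix in
theorem td_drift_bound {n K : ℕ} (X : Matrix (Fin n) (Fin K) ℝ)
    (d : Fin n → ℝ) (P : Matrix (Fin n) (Fin n) ℝ) (γ : ℝ) (r : Fin n → ℝ)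
    (hX : ∀ v : Fin K → ℝ, X.mulVec v = 0 → v = 0)
    (hP_nonneg : ∀ i j, 0 ≤ P i j) (hP_row : ∀ i, ∑ j, P i j = 1)
    (hd_pos : ∀ i, 0 < d i) (hd_sum : ∑ i, d i = 1)
    (hstat : ∀ j, ∑ i, d i * P i j = d j)
    (hγ0 : 0 ≤ γ) (hγ1 : γ < 1)
    (g : (Fin K → ℝ) → (Fin K → ℝ))
    (hg : ∀ w, g w = (Xᵀ * Matrix.diagonal d * (γ • P - 1) * X).mulVec w +
        (Xᵀ * Matrix.diagonal d).mulVec r)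
    (wstar : Fin K → ℝ) (hwstar : g wstar = 0)
    (lamMin : ℝ)
    (hlam : lamMin = sInf {t : ℝ | ∃ v : Fin K → ℝ,
        (∑ i, (v i) ^ 2) = 1 ∧ t = v ⬝ᵥ ((Xᵀ * Matrix.diagonal d * X).mulVec v)}) :
    ∀ w : Fin K → ℝ,
      (w - wstar) ⬝ᵥ g w ≤ -(1 - γ) * lamMin * ∑ i, (w i - wstar i) ^ 2 := by
  -- general quadratic-form expansion
  have quad : ∀ (C : Matrix (Fin n) (Fin n) ℝ) (v : Fin K → ℝ),
      v ⬝ᵥ (Xᵀ * Matrix.diagonal d * C * X).mulVec v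
        = ∑ i, d i * ((X.mulVec v) i * (C.mulVec (X.mulVec v)) i) := by
    intro C v
    have hA : Xᵀ * Matrix.diagonal d * C * X
        = Xᵀ * (Matrix.diagonal d * (C * X)) := by
      rw [Matrix.mul_assoc, Matrix.mul_assoc]
    rw [hA, ← Matrix.mulVec_mulVec, Matrix.dotProduct_mulVec, Matrix.vecMul_transpose,
      ← Matrix.mulVec_mulVec, ← Matrix.mulVec_mulVec]
    simp only [dotProduct]
    refine Finset.sum_congr rfl fun i _ => ?_
    rw [Matrix.mulVec_diagonal]
    ring
  have quadM : ∀ v : Fin K → ℝ,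
      v ⬝ᵥ (Xᵀ * Matrix.diagonal d * X).mulVec v = ∑ i, d i * (X.mulVec v i) ^ 2 := by
    intro v
    have h := quad 1 v
    rw [Matrix.mul_one] at h
    rw [h]
    refine Finset.sum_congr rfl fun i _ => ?_
    rw [Matrix.one_mulVec]
    ring
  have hbdd : BddBelow {t : ℝ | ∃ v : Fin K → ℝ,
      (∑ i, (v i) ^ 2) = 1 ∧ t = v ⬝ᵥ ((Xᵀ * Matrix.diagonal d * X).mulVec v)} := by
    refine ⟨0, fun t ht => ?_⟩
    obtain ⟨v, -, rfl⟩ := ht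
    rw [quadM]
    exact Finset.sum_nonneg fun i _ => mul_nonneg (hd_pos i).le (sq_nonneg _)
  intro w
  set u : Fin K → ℝ := w - wstar with hu
  set z : Fin n → ℝ := X.mulVec u with hz
  -- g w in terms of u
  have hgw : g w = (Xᵀ * Matrix.diagonal d * (γ • P - 1) * X).mulVec u := by
    have h2 := hwstar
    rw [hg] at h2
    have hc : (Xᵀ * Matrix.diagonal d).mulVec r
        = -(Xᵀ * Matrix.diagonal d * (γ • P - 1) * X).mulVec wstar := by
      rw [eq_neg_iff_add_eq_zero, add_comm]; exact h2
    rw [hg, hc, hu, Matrix.mulVec_sub, ← sub_eq_add_neg]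
  -- expand the drift
  have hAu : u ⬝ᵥ (Xᵀ * Matrix.diagonal d * (γ • P - 1) * X).mulVec u
      = γ * (∑ i, d i * (z i * P.mulVec z i)) - ∑ i, d i * z i ^ 2 := by
    rw [quad, ← hz]
    simp only [Matrix.sub_mulVec, Matrix.smul_mulVec, Matrix.one_mulVec,
      Pi.sub_apply, Pi.smul_apply, smul_eq_mul]
    rw [Finset.mul_sum, ← Finset.sum_sub_distrib]
    exact Finset.sum_congr rfl fun i _ => by ring
  -- the stationarity / stochasticity inequality
  have key : ∑ i, d i * (z i * P.mulVec z i) ≤ ∑ i, d i * z i ^ 2 := by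
    have lhs_eq : ∑ i, d i * (z i * P.mulVec z i)
        = ∑ i, ∑ j, d i * P i j * (z i * z j) := by
      refine Finset.sum_congr rfl fun i _ => ?_
      simp only [Matrix.mulVec, dotProduct]
      rw [Finset.mul_sum, Finset.mul_sum]
      exact Finset.sum_congr rfl fun j _ => by ring
    have step : ∑ i, ∑ j, d i * P i j * (z i * z j)
        ≤ ∑ i, ∑ j, d i * P i j * ((z i ^ 2 + z j ^ 2) / 2) := by
      refine Finset.sum_le_sum fun i _ => Finset.sum_le_sum fun j _ => ?_
      have h1 : 0 ≤ d i * P i j := mul_nonneg (hd_pos i).le (hP_nonneg i j)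
      nlinarith [sq_nonneg (z i - z j)]
    have eA : ∑ i, ∑ j, d i * P i j * z i ^ 2 = ∑ i, d i * z i ^ 2 := by
      refine Finset.sum_congr rfl fun i _ => ?_
      have : ∑ j, d i * P i j * z i ^ 2 = (∑ j, P i j) * (d i * z i ^ 2) := by
        rw [Finset.sum_mul]
        exact Finset.sum_congr rfl fun j _ => by ring
      rw [this, hP_row i, one_mul]
    have eB : ∑ i, ∑ j, d i * P i j * z j ^ 2 = ∑ i, d i * z i ^ 2 := by
      rw [Finset.sum_comm]
      refine Finset.sum_congr rfl fun j _ => ?_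
      have : ∑ i, d i * P i j * z j ^ 2 = (∑ i, d i * P i j) * z j ^ 2 :=
        (Finset.sum_mul _ _ _).symm
      rw [this, hstat j]
    have e1 : ∑ i, ∑ j, d i * P i j * ((z i ^ 2 + z j ^ 2) / 2)
        = ∑ i, d i * z i ^ 2 := by
      have hpt : ∀ i j, d i * P i j * ((z i ^ 2 + z j ^ 2) / 2)
          = d i * P i j * z i ^ 2 / 2 + d i * P i j * z j ^ 2 / 2 := fun i j => by ring
      simp only [hpt, Finset.sum_add_distrib, ← Finset.sum_div]
      rw [eA, eB]; ring
    rw [lhs_eq]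
    exact step.trans_eq e1
  -- eigenvalue bound
  have hmin : lamMin * (∑ i, u i ^ 2) ≤ ∑ i, d i * z i ^ 2 := by
    rcases eq_or_ne u 0 with h | h
    · rw [hz, h]
      simp
    · have hs : 0 < ∑ i, u i ^ 2 := by
        obtain ⟨i, hi⟩ := Function.ne_iff.mp h
        exact Finset.sum_pos' (fun j _ => sq_nonneg _)
          ⟨i, Finset.mem_univ i, by simpa [sq_abs] using pow_pos (abs_pos.mpr hi) 2⟩
      set s : ℝ := ∑ i, u i ^ 2 with hsdef
      have hss : Real.sqrt s * Real.sqrt s = s := Real.mul_self_sqrt hs.le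
      have hsqrt_pos : 0 < Real.sqrt s := Real.sqrt_pos.mpr hs
      have hv : (∑ i, (((Real.sqrt s)⁻¹ • u) i) ^ 2) = 1 := by
        simp only [Pi.smul_apply, smul_eq_mul, mul_pow, ← Finset.mul_sum]
        rw [← hsdef]
        field_simp
        rw [sq, hss]
      have hmem : (u ⬝ᵥ ((Xᵀ * Matrix.diagonal d * X).mulVec u)) / s ∈
          {t : ℝ | ∃ v : Fin K → ℝ,
            (∑ i, (v i) ^ 2) = 1 ∧ t = v ⬝ᵥ ((Xᵀ * Matrix.diagonal d * X).mulVec v)} := by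
        refine ⟨(Real.sqrt s)⁻¹ • u, hv, ?_⟩
        rw [Matrix.mulVec_smul, smul_dotProduct, dotProduct_smul, smul_eq_mul, smul_eq_mul,
          ← mul_assoc, ← mul_inv, hss, div_eq_inv_mul]
      have hle : lamMin ≤ (u ⬝ᵥ ((Xᵀ * Matrix.diagonal d * X).mulVec u)) / s := by
        rw [hlam]; exact csInf_le hbdd hmem
      have hQ : u ⬝ᵥ ((Xᵀ * Matrix.diagonal d * X).mulVec u) = ∑ i, d i * z i ^ 2 := by
        rw [quadM, hz]
      rw [hQ] at hle
      calc lamMin * s ≤ ((∑ i, d i * z i ^ 2) / s) * s :=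
            mul_le_mul_of_nonneg_right hle hs.le
        _ = ∑ i, d i * z i ^ 2 := by field_simp
  -- put everything together
  have hsum : ∑ i, (w i - wstar i) ^ 2 = ∑ i, u i ^ 2 := rfl
  rw [hgw, hAu, hsum]
  nlinarith [mul_le_mul_of_nonneg_left key hγ0, key, hmin]
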